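/- Lower bound for positive superharmonic functions on ℝⁿ: Let n ≥ 3 and let v : ℝⁿ → ℝ be a C² function with v(y) > 0 for all y and Δv(y) ≤ 0 for all y. Then there exists a constant c > 0 such that v(y) ≥ c (1 + |y|)^{2-n} for all y ∈ ℝⁿ. -/

import Mathlib

open Filter Set Metric Topology Asymptotics MeasureTheory Matrix
open scoped Classical ENNReal NNReal

noncomputable section

abbrev En (n : ℕ) := EuclideanSpace ℝ (Fin n)
abbrev Matn (n : ℕ) := Matrix (Fin n) (Fin n) ℝ

/-- Frobenius norm of a matrix. -/
def frobNorm {n : ℕ} (M : Matn n) : ℝ :=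
  Real.sqrt (∑ i, ∑ j, (M i j) ^ 2)

/-- The gradient of `φ` at `x`, as a vector in `ℝⁿ`. -/
def gradVec {n : ℕ} (φ : En n → ℝ) (x : En n) : En n :=
  WithLp.toLp 2 (fun i => fderiv ℝ φ x (EuclideanSpace.single i 1))

/-- The Hessian matrix of `φ` at `x`. -/
def hessMat {n : ℕ} (φ : En n → ℝ) (x : En n) : Matn n :=
  fun i j => fderiv ℝ (fun y => fderiv ℝ φ y (EuclideanSpace.single j 1)) x
    (EuclideanSpace.single i 1)

/-- `g ∈ C^{1,1}_loc(Ω)`: differentiable with locally Lipschitz gradient. -/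
def C11LocOn {n : ℕ} (Ω : Set (En n)) (g : En n → ℝ) : Prop :=
  (∀ x ∈ Ω, DifferentiableAt ℝ g x) ∧
  ∀ x ∈ Ω, ∃ ε > 0, ∃ K : ℝ≥0, LipschitzOnWith K (fun y => fderiv ℝ g y) (ball x ε ∩ Ω)

/-- `g ∈ C^{1,1}(S)`: differentiable with Lipschitz gradient on `S`. -/
def C11On {n : ℕ} (S : Set (En n)) (g : En n → ℝ) : Prop :=
  DifferentiableOn ℝ g S ∧ ∃ K : ℝ≥0, LipschitzOnWith K (fun y => fderivWithin ℝ g S y) S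

/-- `ψ` is punctually second order differentiable at `x` with jet `(ψ x, p, M)`. -/
def HasJet2At {n : ℕ} (ψ : En n → ℝ) (x : En n) (p : En n) (M : Matn n) : Prop :=
  M.IsSymm ∧
  (fun z : En n => ψ (x + z) - ψ x - (∑ i, p i * z i) - (1 / 2) * ∑ i, ∑ j, M i j * z i * z j)
    =o[𝓝 0] fun z : En n => ‖z‖ ^ 2

/-- The slice `𝒰ₓ`. -/
def Uslice {n : ℕ} (𝒰 : Set (En n × ℝ × En n × Matn n)) (x : En n) :
    Set (ℝ × En n × Matn n) :=
  {t | (x, t.1, t.2.1, t.2.2) ∈ 𝒰}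

/-- `𝒰` is a nonempty (relatively) open subset of `Ω̄ × ℝ × ℝⁿ × Symₙ`. -/
def UAdmissible {n : ℕ} (Ω : Set (En n)) (𝒰 : Set (En n × ℝ × En n × Matn n)) : Prop :=
  𝒰.Nonempty ∧ (∀ q ∈ 𝒰, q.1 ∈ closure Ω ∧ (q.2.2.2).IsSymm) ∧
  ∃ V : Set (En n × ℝ × En n × Matn n), IsOpen V ∧
    𝒰 = V ∩ {q | q.1 ∈ closure Ω ∧ (q.2.2.2).IsSymm}

/-- Condition (i): `(F,𝒰)` is elliptic. -/
def EllipticU {n : ℕ} (𝒰 : Set (En n × ℝ × En n × Matn n))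
    (F : En n × ℝ × En n × Matn n → ℝ) : Prop :=
  ∀ x s (p : En n) (M : Matn n), (x, s, p, M) ∈ 𝒰 → ∀ N : Matn n, N.PosSemidef →
    (x, s, p, M + N) ∈ 𝒰 ∧ F (x, s, p, M) ≤ F (x, s, p, M + N)

/-- Condition (ii): `F < 1` on `∂𝒰ₓ` for all `x ∈ Ω̄`. -/
def SuplevelStrict {n : ℕ} (Ω : Set (En n)) (𝒰 : Set (En n × ℝ × En n × Matn n))
    (F : En n × ℝ × En n × Matn n → ℝ) : Prop :=
  ∀ x ∈ closure Ω, ∀ t ∈ closure (Uslice 𝒰 x), t ∉ Uslice 𝒰 x →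
    F (x, t.1, t.2.1, t.2.2) < 1

/-- Condition (ii'): `F ≤ 1` on `∂𝒰ₓ` for all `x ∈ Ω̄`. -/
def SuplevelWeak {n : ℕ} (Ω : Set (En n)) (𝒰 : Set (En n × ℝ × En n × Matn n))
    (F : En n × ℝ × En n × Matn n → ℝ) : Prop :=
  ∀ x ∈ closure Ω, ∀ t ∈ closure (Uslice 𝒰 x), t ∉ Uslice 𝒰 x →
    F (x, t.1, t.2.1, t.2.2) ≤ 1

/-- Condition (iii): local strict ellipticity. -/
def LocStrictEllU {n : ℕ} (𝒰 : Set (En n × ℝ × En n × Matn n))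
    (F : En n × ℝ × En n × Matn n → ℝ) : Prop :=
  ∀ 𝒦 : Set (En n × ℝ × En n × Matn n), 𝒦 ⊆ 𝒰 → IsCompact 𝒦 →
    ∃ δ > 0, ∀ x s (p : En n) (M : Matn n), (x, s, p, M) ∈ 𝒦 → ∀ N : Matn n, N.PosSemidef →
      δ * frobNorm N ≤ F (x, s, p, M + N) - F (x, s, p, M)

/-- Condition (iv): local Lipschitz continuity in `(s,p,M)`. -/
def LocLipU {n : ℕ} (𝒰 : Set (En n × ℝ × En n × Matn n))
    (F : En n × ℝ × En n × Matn n → ℝ) : Prop :=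
  ∀ 𝒦 : Set (En n × ℝ × En n × Matn n), 𝒦 ⊆ 𝒰 → IsCompact 𝒦 →
    ∃ C > 0, ∀ x s (p : En n) (M : Matn n) s' (p' : En n) (M' : Matn n),
      (x, s, p, M) ∈ 𝒦 → (x, s', p', M') ∈ 𝒦 →
      |F (x, s, p, M) - F (x, s', p', M')| ≤ C * (|s - s'| + ‖p - p'‖ + frobNorm (M - M'))

/-- `F(x, J₂[ψ]) ≥ c` in `Ω` in the viscosity sense. -/
def ViscGe {n : ℕ} (Ω : Set (En n)) (𝒰 : Set (En n × ℝ × En n × Matn n))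
    (F : En n × ℝ × En n × Matn n → ℝ) (c : ℝ) (ψ : En n → EReal) : Prop :=
  ∀ x₀ ∈ Ω, ∀ φ : En n → ℝ, ContDiffOn ℝ 2 φ Ω → ψ x₀ = (φ x₀ : EReal) →
    (∀ᶠ x in 𝓝[Ω] x₀, ψ x ≤ (φ x : EReal)) →
    (x₀, φ x₀, gradVec φ x₀, hessMat φ x₀) ∈ closure 𝒰 ∧
      c ≤ F (x₀, φ x₀, gradVec φ x₀, hessMat φ x₀)

/-- `F(x, J₂[ψ]) ≤ c` in `Ω` in the viscosity sense. -/
def ViscLe {n : ℕ} (Ω : Set (En n)) (𝒰 : Set (En n × ℝ × En n × Matn n))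
    (F : En n × ℝ × En n × Matn n → ℝ) (c : ℝ) (ψ : En n → EReal) : Prop :=
  ∀ x₀ ∈ Ω, ∀ φ : En n → ℝ, ContDiffOn ℝ 2 φ Ω → ψ x₀ = (φ x₀ : EReal) →
    (∀ᶠ x in 𝓝[Ω] x₀, (φ x : EReal) ≤ ψ x) →
    ((x₀, φ x₀, gradVec φ x₀, hessMat φ x₀) ∉ closure 𝒰 ∨
      F (x₀, φ x₀, gradVec φ x₀, hessMat φ x₀) ≤ c)

/-- The eigenvalues of a (symmetric) matrix, listed with multiplicity in
nondecreasing order; junk value `0` if the matrix is not symmetric. -/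
def eigs {n : ℕ} (M : Matn n) : En n :=
  if h : M.IsHermitian then WithLp.toLp 2 (fun i => h.eigenvalues (Tuple.sort h.eigenvalues i)) else 0

/-- The conformal Hessian `A^u`. -/
def confHess {n : ℕ} (u : En n → ℝ) (x : En n) : Matn n :=
  fun i j =>
    -(2 / ((n : ℝ) - 2)) * (u x) ^ (-((n : ℝ) + 2) / ((n : ℝ) - 2)) * hessMat u x i j
    + (2 * (n : ℝ) / ((n : ℝ) - 2) ^ 2) * (u x) ^ (-(2 * (n : ℝ)) / ((n : ℝ) - 2)) *
        (gradVec u x i * gradVec u x j)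
    - (2 / ((n : ℝ) - 2) ^ 2) * (u x) ^ (-(2 * (n : ℝ)) / ((n : ℝ) - 2)) *
        (∑ k, (gradVec u x k) ^ 2) * (if i = j then (1 : ℝ) else 0)

/-- Condition (1): `(f,Γ)` is symmetric. -/
def SymmCond {n : ℕ} (Γ : Set (En n)) (f : En n → ℝ) : Prop :=
  ∀ l ∈ Γ, ∀ σ : Equiv.Perm (Fin n),
    (WithLp.toLp 2 (fun i => l (σ i)) : En n) ∈ Γ ∧ f (WithLp.toLp 2 (fun i => l (σ i))) = f l

/-- Condition (2): `(f,Γ)` is elliptic. -/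
def EllCond {n : ℕ} (Γ : Set (En n)) (f : En n → ℝ) : Prop :=
  ∀ l ∈ Γ, ∀ μ : En n, (∀ i, 0 ≤ μ i) → l + μ ∈ Γ ∧ f l ≤ f (l + μ)

/-- Condition (3): local strict ellipticity. -/
def StrictEllCond {n : ℕ} (Γ : Set (En n)) (f : En n → ℝ) : Prop :=
  ∀ K : Set (En n), K ⊆ Γ → IsCompact K →
    ∃ δ > 0, ∀ l ∈ K, ∀ μ : En n, (∀ i, 0 ≤ μ i) → δ * ‖μ‖ ≤ f (l + μ) - f l

/-- Condition (4): local Lipschitz continuity. -/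
def LipCond {n : ℕ} (Γ : Set (En n)) (f : En n → ℝ) : Prop :=
  ∀ K : Set (En n), K ⊆ Γ → IsCompact K →
    ∃ C > 0, ∀ l ∈ K, ∀ l' ∈ K, |f l - f l'| ≤ C * ‖l - l'‖

/-- Condition (5): the `1`-superlevel set of `f` stays in `Γ`. -/
def LevelCond {n : ℕ} (Γ : Set (En n)) (f : En n → ℝ) : Prop :=
  {l ∈ closure Γ | 1 ≤ f l} ⊆ Γ

/-- Condition (6): `Γ ⊆ Γ₁`. -/
def TraceCond {n : ℕ} (Γ : Set (En n)) : Prop :=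
  ∀ l ∈ Γ, 0 < ∑ i, l i

/-- `u` is a viscosity subsolution of `f(λ(A^u)) = 1` in `Ω`. -/
def ConfViscSub {n : ℕ} (Ω : Set (En n)) (Γ : Set (En n)) (f : En n → ℝ)
    (u : En n → ℝ) : Prop :=
  ∀ x₀ ∈ Ω, ∀ φ : En n → ℝ, ContDiffOn ℝ 2 φ Ω → (∀ x ∈ Ω, 0 < φ x) →
    φ x₀ = u x₀ → (∀ᶠ x in 𝓝[Ω] x₀, φ x ≤ u x) →
    eigs (confHess φ x₀) ∈ closure Γ ∧ 1 ≤ f (eigs (confHess φ x₀))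

/-- `u` is a viscosity supersolution of `f(λ(A^u)) = 1` in `Ω`. -/
def ConfViscSup {n : ℕ} (Ω : Set (En n)) (Γ : Set (En n)) (f : En n → ℝ)
    (u : En n → EReal) : Prop :=
  ∀ x₀ ∈ Ω, ∀ φ : En n → ℝ, ContDiffOn ℝ 2 φ Ω → (∀ x ∈ Ω, 0 < φ x) →
    (φ x₀ : EReal) = u x₀ → (∀ᶠ x in 𝓝[Ω] x₀, u x ≤ (φ x : EReal)) →
    (eigs (confHess φ x₀) ∉ closure Γ ∨ f (eigs (confHess φ x₀)) ≤ 1)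

/-- The Kelvin-type transform `w_{x,λ}`. -/
def kelvin {n : ℕ} (w : En n → ℝ) (x : En n) (l : ℝ) (y : En n) : ℝ :=
  (l ^ (n - 2) / ‖y - x‖ ^ (n - 2)) * w (x + (l ^ 2 / ‖y - x‖ ^ 2) • (y - x))

namespace PSH
variable {n : ℕ}
abbrev ee (i : Fin n) : En n := EuclideanSpace.single i 1

def r2 (y : En n) : ℝ := ∑ i, (y i) ^ 2

lemma r2_eq (y : En n) : r2 y = ‖y‖ ^ 2 := by
  rw [EuclideanSpace.norm_eq, Real.sq_sqrt (by positivity)]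
  simp [r2, Real.norm_eq_abs, sq_abs]

lemma r2_pos {y : En n} (hy : y ≠ 0) : 0 < r2 y := by
  have : 0 < ‖y‖ := norm_pos_iff.mpr hy
  rw [r2_eq]; positivity

def Dr2 (y : En n) : En n →L[ℝ] ℝ :=
  ∑ i, (2 * y i) • (EuclideanSpace.proj i : En n →L[ℝ] ℝ)

lemma Dr2_apply (y : En n) (j : Fin n) : Dr2 y (ee j) = 2 * y j := by
  simp [Dr2, ContinuousLinearMap.sum_apply, EuclideanSpace.single_apply]

lemma hasFDerivAt_coord (y : En n) (i : Fin n) :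
    HasFDerivAt (fun y : En n => y i) (EuclideanSpace.proj i : En n →L[ℝ] ℝ) y := by
  simpa [PiLp.proj_apply] using (EuclideanSpace.proj i : En n →L[ℝ] ℝ).hasFDerivAt

lemma hasFDerivAt_r2 (y : En n) : HasFDerivAt r2 (Dr2 y) y := by
  have h : ∀ i : Fin n, HasFDerivAt (fun y : En n => (y i) ^ 2)
      ((2 * y i) • (EuclideanSpace.proj i : En n →L[ℝ] ℝ)) y := by
    intro i
    have h2 : HasDerivAt (fun t : ℝ => t ^ 2) (2 * y i) (y i) := by
      simpa using hasDerivAt_pow 2 (y i)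
    exact h2.comp_hasFDerivAt y (hasFDerivAt_coord y i)
  exact HasFDerivAt.fun_sum (fun i _ => h i)

lemma hasFDerivAt_rp (γ : ℝ) {y : En n} (hy : y ≠ 0) :
    HasFDerivAt (fun y : En n => r2 y ^ γ) ((γ * r2 y ^ (γ - 1)) • Dr2 y) y :=
  (Real.hasDerivAt_rpow_const (Or.inl (r2_pos hy).ne')).comp_hasFDerivAt y (hasFDerivAt_r2 y)

lemma second_test {w : En n → ℝ} {x : En n}
    (hw : ∀ᶠ y in 𝓝 x, DifferentiableAt ℝ w y)
    (hmin : IsLocalMin w x)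
    {i : Fin n} {Φ : En n → ℝ} {D : En n →L[ℝ] ℝ}
    (hΦ : (fun y => fderiv ℝ w y (ee i)) =ᶠ[𝓝 x] Φ)
    (hD : HasFDerivAt Φ D x) :
    0 ≤ D (ee i) := by
  by_contra hL
  push_neg at hL
  set e : En n := ee i with he
  set ℓ : ℝ → En n := fun t => x + t • e with hℓdef
  have hℓd : ∀ t, HasDerivAt ℓ e t := fun t => by
    have h := ((hasDerivAt_id t).smul_const e).const_add x; rw [one_smul] at h; exact h
  have hℓ0 : ℓ 0 = x := by simp [hℓdef]
  have hℓc : Continuous ℓ := by fun_prop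
  have hℓt : Tendsto ℓ (𝓝 0) (𝓝 x) := by
    simpa [hℓ0] using hℓc.tendsto 0
  have hF : HasFDerivAt (fun y => fderiv ℝ w y e) D x := hD.congr_of_eventuallyEq hΦ
  set g₁ : ℝ → ℝ := fun t => fderiv ℝ w (ℓ t) e with hg₁def
  have hg₁ : HasDerivAt g₁ (D e) 0 := by
    have h0 : HasFDerivAt (fun y => fderiv ℝ w y e) D (ℓ 0) := hℓ0 ▸ hF
    exact h0.comp_hasDerivAt 0 (hℓd 0)
  have hg₁0 : g₁ 0 = 0 := by
    rw [hg₁def]; simp only [hℓ0, hmin.fderiv_eq_zero]; rfl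
  -- slope negative near 0⁺
  have hslope : ∀ᶠ t in 𝓝[>] (0:ℝ), g₁ t < 0 := by
    have h1 : Tendsto (slope g₁ 0) (𝓝[≠] (0:ℝ)) (𝓝 (D e)) :=
      hasDerivAt_iff_tendsto_slope.mp hg₁
    have h2 : ∀ᶠ t in 𝓝[≠] (0:ℝ), slope g₁ 0 t < 0 := h1.eventually_lt_const hL
    have h3 : ∀ᶠ t in 𝓝[>] (0:ℝ), slope g₁ 0 t < 0 :=
      h2.filter_mono (nhdsWithin_mono 0 (fun t ht => ne_of_gt ht))
    filter_upwards [h3, self_mem_nhdsWithin] with t h4 h5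
    rw [slope_def_field, hg₁0, sub_zero, sub_zero] at h4
    rcases div_neg_iff.mp h4 with ⟨h6, h7⟩ | ⟨h6, h7⟩
    · exact absurd h7 (not_lt.mpr (le_of_lt h5))
    · exact h6
  -- derivative of g on a neighborhood
  set g : ℝ → ℝ := fun t => w (ℓ t) with hgdef
  have hg' : ∀ᶠ t in 𝓝 (0:ℝ), HasDerivAt g (g₁ t) t := by
    filter_upwards [hℓt.eventually hw] with t ht
    exact ht.hasFDerivAt.comp_hasDerivAt t (hℓd t)
  have hming : ∀ᶠ t in 𝓝 (0:ℝ), g 0 ≤ g t := by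
    have : ∀ᶠ y in 𝓝 x, w x ≤ w y := hmin
    filter_upwards [hℓt.eventually this] with t ht
    simpa [hgdef, hℓ0] using ht
  obtain ⟨ε, hε, hP⟩ := Metric.eventually_nhds_iff.mp (hg'.and hming)
  obtain ⟨u, hu, hIoc⟩ := mem_nhdsGT_iff_exists_Ioc_subset.mp hslope
  set δ : ℝ := min (ε/2) u with hδdef
  have hδ : 0 < δ := lt_min (by linarith) hu
  have hPt : ∀ t ∈ Icc (0:ℝ) δ, HasDerivAt g (g₁ t) t ∧ g 0 ≤ g t := by
    intro t ht
    apply hP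
    rw [Real.dist_eq, sub_zero, abs_of_nonneg ht.1]
    exact lt_of_le_of_lt (ht.2.trans (min_le_left _ _)) (by linarith)
  have hanti : StrictAntiOn g (Icc 0 δ) := by
    apply strictAntiOn_of_deriv_neg (convex_Icc 0 δ)
    · exact fun t ht => ((hPt t ht).1.differentiableAt.continuousAt).continuousWithinAt
    · intro t ht
      rw [interior_Icc] at ht
      rw [((hPt t ⟨ht.1.le, ht.2.le⟩).1).deriv]
      exact hIoc ⟨ht.1, ht.2.le.trans (min_le_right _ _)⟩
  have h1 : g δ < g 0 := hanti (left_mem_Icc.mpr hδ.le) (right_mem_Icc.mpr hδ.le) hδ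
  have h2 : g 0 ≤ g δ := (hPt δ (right_mem_Icc.mpr hδ.le)).2
  linarith

lemma interior_min_contra {v : En n → ℝ} (hv : ContDiff ℝ 2 v)
    (hsuper : ∀ y, ∑ i, hessMat v y i i ≤ 0) (hn : 3 ≤ n)
    {c : ℝ} (hc : 0 < c) {z : En n} (hz : z ≠ 0)
    (hmin : IsLocalMin
      (fun y => v y - c * (r2 y ^ (((2:ℝ) - n)/2) + r2 y ^ (((1:ℝ) - n)/2))) z) :
    False := by
  have hn3 : (3:ℝ) ≤ (n:ℝ) := by exact_mod_cast hn
  set β₁ : ℝ := ((2:ℝ) - n)/2 with hβ₁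
  set β₂ : ℝ := ((1:ℝ) - n)/2 with hβ₂
  set w : En n → ℝ := fun y => v y - c * (r2 y ^ β₁ + r2 y ^ β₂) with hw
  have hvd : Differentiable ℝ v := hv.differentiable two_ne_zero
  have hU : ∀ᶠ y in 𝓝 z, y ≠ (0 : En n) :=
    eventually_ne_nhds hz
  -- w has explicit derivative formula away from 0
  have hwder : ∀ y : En n, y ≠ 0 → HasFDerivAt w
      (fderiv ℝ v y - c • ((β₁ * r2 y ^ (β₁ - 1)) • Dr2 y + (β₂ * r2 y ^ (β₂ - 1)) • Dr2 y)) y := by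
    intro y hy
    exact (hvd y).hasFDerivAt.sub (((hasFDerivAt_rp β₁ hy).add (hasFDerivAt_rp β₂ hy)).const_mul c)
  have hwdiff : ∀ᶠ y in 𝓝 z, DifferentiableAt ℝ w y := by
    filter_upwards [hU] with y hy; exact (hwder y hy).differentiableAt
  -- the gradient component functions
  set Φ : Fin n → En n → ℝ := fun i y =>
    fderiv ℝ v y (ee i) - c * ((β₁ * r2 y ^ (β₁ - 1) + β₂ * r2 y ^ (β₂ - 1)) * (2 * y i))
    with hΦdef
  have hΦeq : ∀ i : Fin n, (fun y => fderiv ℝ w y (ee i)) =ᶠ[𝓝 z] Φ i := by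
    intro i
    filter_upwards [hU] with y hy
    rw [(hwder y hy).fderiv]
    simp only [ContinuousLinearMap.sub_apply, ContinuousLinearMap.smul_apply,
      ContinuousLinearMap.add_apply, Dr2_apply, hΦdef, smul_eq_mul]
    ring
  -- differentiability of Φ i at z and the value of the derivative
  have hVdiff : ∀ i : Fin n, DifferentiableAt ℝ (fun y => fderiv ℝ v y (ee i)) z := by
    intro i
    have h2 : DifferentiableAt ℝ (fderiv ℝ v) z :=
      (hv.fderiv_right (m := 1) (by norm_num)).differentiable one_ne_zero z
    exact h2.clm_apply (differentiableAt_const _)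
  set H : En n → ℝ := fun y => β₁ * r2 y ^ (β₁ - 1) + β₂ * r2 y ^ (β₂ - 1) with hHdef
  have hHder : HasFDerivAt H
      (((β₁ * ((β₁ - 1) * r2 z ^ (β₁ - 1 - 1))) • Dr2 z)
        + ((β₂ * ((β₂ - 1) * r2 z ^ (β₂ - 1 - 1))) • Dr2 z)) z := by
    have h1 := (hasFDerivAt_rp (β₁ - 1) hz).const_mul β₁
    have h2 := (hasFDerivAt_rp (β₂ - 1) hz).const_mul β₂
    have := h1.add h2
    simp only [smul_smul] at this; exact this
  have hcoord : ∀ i : Fin n, HasFDerivAt (fun y : En n => 2 * y i)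
      ((2:ℝ) • (EuclideanSpace.proj i : En n →L[ℝ] ℝ)) z :=
    fun i => (hasFDerivAt_coord z i).const_mul 2
  -- product rule
  set K : ℝ := β₁ * ((β₁ - 1) * r2 z ^ (β₁ - 1 - 1)) + β₂ * ((β₂ - 1) * r2 z ^ (β₂ - 1 - 1))
    with hKdef
  have hprod : ∀ i : Fin n, HasFDerivAt (fun y => H y * (2 * y i))
      ((H z) • ((2:ℝ) • (EuclideanSpace.proj i : En n →L[ℝ] ℝ))
        + (2 * z i) • (((β₁ * ((β₁ - 1) * r2 z ^ (β₁ - 1 - 1))) • Dr2 z)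
          + ((β₂ * ((β₂ - 1) * r2 z ^ (β₂ - 1 - 1))) • Dr2 z))) z :=
    fun i => hHder.mul (hcoord i)
  have hsd : ∀ i : Fin n, HasFDerivAt (Φ i)
      (fderiv ℝ (fun y => fderiv ℝ v y (ee i)) z
        - c • ((H z) • ((2:ℝ) • (EuclideanSpace.proj i : En n →L[ℝ] ℝ))
        + (2 * z i) • ((β₁ * ((β₁ - 1) * r2 z ^ (β₁ - 1 - 1))) • Dr2 z
          + (β₂ * ((β₂ - 1) * r2 z ^ (β₂ - 1 - 1))) • Dr2 z))) z :=
    fun i => ((hVdiff i).hasFDerivAt).sub ((hprod i).const_mul c)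
  have hpos : ∀ i : Fin n,
      0 ≤ hessMat v z i i - c * (2 * H z + (2 * z i) * (K * (2 * z i))) := by
    intro i
    have h0 := second_test hwdiff hmin (hΦeq i) (hsd i)
    have hval : (fderiv ℝ (fun y => fderiv ℝ v y (ee i)) z
        - c • ((H z) • ((2:ℝ) • (EuclideanSpace.proj i : En n →L[ℝ] ℝ))
        + (2 * z i) • ((β₁ * ((β₁ - 1) * r2 z ^ (β₁ - 1 - 1))) • Dr2 z
          + (β₂ * ((β₂ - 1) * r2 z ^ (β₂ - 1 - 1))) • Dr2 z))) (ee i)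
        = hessMat v z i i - c * (2 * H z + (2 * z i) * (K * (2 * z i))) := by
      simp only [ContinuousLinearMap.sub_apply, ContinuousLinearMap.smul_apply,
        ContinuousLinearMap.add_apply, Dr2_apply, smul_eq_mul, hKdef, hessMat]
      have : (EuclideanSpace.proj i : En n →L[ℝ] ℝ) (ee i) = 1 := by
        simp [EuclideanSpace.single_apply]
      rw [this]
      ring
    rw [hval] at h0
    exact h0
  have hsumpos : (0:ℝ) ≤
      ∑ i, (hessMat v z i i - c * (2 * H z + (2 * z i) * (K * (2 * z i)))) :=
    Finset.sum_nonneg fun i _ => hpos i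
  have hsum_eq : ∑ i, (hessMat v z i i - c * (2 * H z + (2 * z i) * (K * (2 * z i))))
      = (∑ i, hessMat v z i i) - c * (2 * n * H z + 4 * K * r2 z) := by
    rw [Finset.sum_sub_distrib]
    congr 1
    rw [← Finset.mul_sum]
    congr 1
    have : ∀ i : Fin n, 2 * H z + (2 * z i) * (K * (2 * z i))
        = 2 * H z + 4 * K * (z i)^2 := by intro i; ring
    simp only [this]
    rw [Finset.sum_add_distrib, Finset.sum_const, Finset.card_univ, Fintype.card_fin,
      nsmul_eq_mul, ← Finset.mul_sum]
    have : ∑ i : Fin n, (z i)^2 = r2 z := rfl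
    rw [this]
    ring
  have hs := r2_pos hz
  have hb : (0:ℝ) < r2 z ^ (β₂ - 1) := Real.rpow_pos_of_pos hs _
  have hkey : 2 * (n:ℝ) * H z + 4 * K * r2 z = ((n:ℝ) - 1) * r2 z ^ (β₂ - 1) := by
    have e1 : r2 z ^ (β₁ - 1 - 1) = r2 z ^ (β₁ - 1) / r2 z :=
      Real.rpow_sub_one hs.ne' (β₁ - 1)
    have e2 : r2 z ^ (β₂ - 1 - 1) = r2 z ^ (β₂ - 1) / r2 z :=
      Real.rpow_sub_one hs.ne' (β₂ - 1)
    rw [hHdef, hKdef, e1, e2, hβ₁, hβ₂]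
    field_simp
    ring
  rw [hsum_eq, hkey] at hsumpos
  have hΔ := hsuper z
  have : 0 < c * (((n:ℝ) - 1) * r2 z ^ (β₂ - 1)) :=
    mul_pos hc (mul_pos (by linarith) hb)
  linarith
end PSH



/-- Lower bound for positive superharmonic `C²` functions on `ℝⁿ`, `n ≥ 3`. -/
theorem positive_superharmonic_lower_bound {n : ℕ} (hn : 3 ≤ n)
    (v : En n → ℝ) (hv : ContDiff ℝ 2 v)
    (hvpos : ∀ y, 0 < v y)
    (hsuper : ∀ y, ∑ i, hessMat v y i i ≤ 0) :
    ∃ c > 0, ∀ y : En n, c * (1 + ‖y‖) ^ ((2 : ℝ) - n) ≤ v y := by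
  have hn3 : (3:ℝ) ≤ (n:ℝ) := by exact_mod_cast hn
  obtain ⟨x₀, hx₀, hmx⟩ := (isCompact_closedBall (0:En n) 1).exists_isMinOn
    ⟨0, mem_closedBall_self zero_le_one⟩ hv.continuous.continuousOn
  set m := v x₀ with hm
  have hmpos : 0 < m := hvpos x₀
  set c := m / 2 with hcdef
  have hc : 0 < c := by positivity
  set β₁ : ℝ := ((2:ℝ) - n)/2 with hβ₁
  set β₂ : ℝ := ((1:ℝ) - n)/2 with hβ₂
  set w : En n → ℝ := fun y => v y - c * (PSH.r2 y ^ β₁ + PSH.r2 y ^ β₂) with hw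
  have hvd : Differentiable ℝ v := hv.differentiable two_ne_zero
  have hwdiff : ∀ y : En n, y ≠ 0 → DifferentiableAt ℝ w y := fun y hy =>
    (hvd y).sub
      (((PSH.hasFDerivAt_rp β₁ hy).add (PSH.hasFDerivAt_rp β₂ hy)).const_mul c).differentiableAt
  have hkey : ∀ y₀ : En n, 1 ≤ ‖y₀‖ → 0 ≤ w y₀ := by
    intro y₀ hy₀
    have hbound : ∀ᶠ R in atTop, -(2 * c * R ^ ((2:ℝ) - n)) ≤ w y₀ := by
      filter_upwards [eventually_ge_atTop (max 1 ‖y₀‖)] with R hR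
      have hR1 : (1:ℝ) ≤ R := le_trans (le_max_left _ _) hR
      have hRy : ‖y₀‖ ≤ R := le_trans (le_max_right _ _) hR
      set A : Set (En n) := {y : En n | 1 ≤ ‖y‖} ∩ closedBall 0 R with hA
      have hclosed : IsClosed {y : En n | 1 ≤ ‖y‖} :=
        isClosed_le continuous_const continuous_norm
      have hAc : IsCompact A := (isCompact_closedBall 0 R).inter_left hclosed
      have hA0 : y₀ ∈ A := ⟨hy₀, by simpa [mem_closedBall, dist_zero_right] using hRy⟩
      have hne0 : ∀ y ∈ A, y ≠ (0 : En n) := by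
        intro y hy h0
        have : (1:ℝ) ≤ ‖(0:En n)‖ := h0 ▸ hy.1
        simp at this; linarith
      have hwc : ContinuousOn w A := fun y hy =>
        ((hwdiff y (hne0 y hy)).continuousAt).continuousWithinAt
      obtain ⟨z, hzA, hzmin⟩ := hAc.exists_isMinOn ⟨y₀, hA0⟩ hwc
      have hz1 : 1 ≤ ‖z‖ := hzA.1
      have hzR : ‖z‖ ≤ R := by simpa [mem_closedBall, dist_zero_right] using hzA.2
      have hz0 : z ≠ 0 := hne0 z hzA
      have hRpow_pos : 0 ≤ 2 * c * R ^ ((2:ℝ) - n) := by positivity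
      have hwz : -(2 * c * R ^ ((2:ℝ) - n)) ≤ w z := by
        rcases eq_or_lt_of_le hz1 with heq1 | hgt1
        · -- ‖z‖ = 1
          have hr2 : PSH.r2 z = 1 := by rw [PSH.r2_eq, ← heq1]; norm_num
          have hwzv : w z = v z - m := by
            simp only [hw, hr2, Real.one_rpow, hcdef]; ring
          have hvz : m ≤ v z := hmx (by
            simpa [mem_closedBall, dist_zero_right] using heq1.symm.le)
          linarith
        rcases eq_or_lt_of_le hzR with heqR | hltR
        · -- ‖z‖ = R
          have hR0 : (0:ℝ) ≤ R := by linarith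
          have hr2 : PSH.r2 z = R^2 := by rw [PSH.r2_eq, heqR]
          have hq1 : PSH.r2 z ^ β₁ = R ^ ((2:ℝ) - n) := by
            rw [hr2, ← Real.rpow_natCast R 2, ← Real.rpow_mul hR0]
            congr 1; rw [hβ₁]; push_cast; ring
          have hq2 : PSH.r2 z ^ β₂ = R ^ ((1:ℝ) - n) := by
            rw [hr2, ← Real.rpow_natCast R 2, ← Real.rpow_mul hR0]
            congr 1; rw [hβ₂]; push_cast; ring
          have hle : R ^ ((1:ℝ) - n) ≤ R ^ ((2:ℝ) - n) :=
            Real.rpow_le_rpow_of_exponent_le hR1 (by linarith)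
          have hvz : 0 < v z := hvpos z
          have hwzv : w z = v z - c * (R ^ ((2:ℝ) - n) + R ^ ((1:ℝ) - n)) := by
            simp only [hw, hq1, hq2]
          rw [hwzv]
          nlinarith
        · -- interior: contradiction
          exfalso
          have hmem : A ∈ 𝓝 z := by
            rw [_root_.mem_nhds_iff]
            refine ⟨ball z (min (‖z‖ - 1) (R - ‖z‖)), ?_, isOpen_ball,
              mem_ball_self (lt_min (by linarith) (by linarith))⟩
            intro y hy
            rw [mem_ball] at hy
            have hd : ‖y - z‖ < min (‖z‖ - 1) (R - ‖z‖) := by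
              rw [← dist_eq_norm]; exact hy
            constructor
            · have := norm_sub_norm_le z y
              have h2 : ‖z - y‖ < ‖z‖ - 1 := by
                rw [norm_sub_rev]; exact lt_of_lt_of_le hd (min_le_left _ _)
              simp only [mem_setOf_eq]
              linarith [norm_sub_norm_le z y]
            · rw [mem_closedBall, dist_zero_right]
              have := norm_le_norm_add_norm_sub' y z
              have h2 : ‖y - z‖ < R - ‖z‖ := lt_of_lt_of_le hd (min_le_right _ _)
              calc ‖y‖ = ‖z + (y - z)‖ := by congr 1; abel
                _ ≤ ‖z‖ + ‖y - z‖ := norm_add_le _ _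
                _ ≤ R := by linarith
          have hlocal : IsLocalMin w z := hzmin.isLocalMin hmem
          exact PSH.interior_min_contra hv hsuper hn hc hz0 hlocal
      exact le_trans hwz (hzmin hA0)
    have hlim : Tendsto (fun R : ℝ => -(2 * c * R ^ ((2:ℝ) - n))) atTop (𝓝 0) := by
      have h0 : Tendsto (fun R : ℝ => R ^ ((2:ℝ) - n)) atTop (𝓝 0) := by
        have he : ((2:ℝ) - n) = -((n:ℝ) - 2) := by ring
        rw [he]; exact tendsto_rpow_neg_atTop (by linarith)
      have := (h0.const_mul (2*c)).neg
      simpa using this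
    simpa using le_of_tendsto hlim hbound
  refine ⟨c, hc, fun y => ?_⟩
  have h1y : (1:ℝ) ≤ 1 + ‖y‖ := by linarith [norm_nonneg y]
  rcases le_or_gt ‖y‖ 1 with hle | hgt
  · have h1 : (1 + ‖y‖) ^ ((2:ℝ) - n) ≤ 1 :=
      Real.rpow_le_one_of_one_le_of_nonpos h1y (by linarith)
    have hvy : m ≤ v y := hmx (by simpa [mem_closedBall, dist_zero_right] using hle)
    nlinarith
  · have h0 : 0 ≤ w y := hkey y hgt.le
    have hy0 : y ≠ 0 := by
      intro h; rw [h] at hgt; simp at hgt; linarith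
    have hq2 : 0 ≤ PSH.r2 y ^ β₂ := (Real.rpow_pos_of_pos (PSH.r2_pos hy0) _).le
    have hq1 : PSH.r2 y ^ β₁ = ‖y‖ ^ ((2:ℝ) - n) := by
      rw [PSH.r2_eq, ← Real.rpow_natCast ‖y‖ 2, ← Real.rpow_mul (norm_nonneg y)]
      congr 1; rw [hβ₁]; push_cast; ring
    have hmono : (1 + ‖y‖) ^ ((2:ℝ) - n) ≤ ‖y‖ ^ ((2:ℝ) - n) :=
      Real.rpow_le_rpow_of_nonpos (by linarith) (by linarith) (by linarith)
    have hwy : w y = v y - c * (PSH.r2 y ^ β₁ + PSH.r2 y ^ β₂) := rfl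
    rw [hwy, hq1] at h0
    nlinarith
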